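/- Let v(t,x) and B(t,x) be time-dependent divergence-free C¹ vector fields on I × M ⊆ ℝ × ℝ³. Then B satisfies the frozen-field equation ∂B/∂t − ∇ × (v × B) = 0 if and only if the time-extended vector fields ∂_t + v and B on I × M commute: [∂_t + v, B] = 0. -/

import Mathlib

open Matrix

/-- The `i`-th standard basis vector of ℝ³. -/
noncomputable def e (i : Fin 3) : Fin 3 → ℝ := Pi.single i 1

/-- Partial derivative of a scalar function in the `i`-th coordinate direction. -/
noncomputable def pd (f : (Fin 3 → ℝ) → ℝ) (i : Fin 3) (x : Fin 3 → ℝ) : ℝ :=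
  fderiv ℝ f x (e i)

/-- Divergence ∇ ⋅ u of a vector field on ℝ³. -/
noncomputable def div3 (u : (Fin 3 → ℝ) → (Fin 3 → ℝ)) (x : Fin 3 → ℝ) : ℝ :=
  ∑ i, pd (fun y => u y i) i x

/-- Curl ∇ × u of a vector field on ℝ³. -/
noncomputable def curl3 (u : (Fin 3 → ℝ) → (Fin 3 → ℝ)) (x : Fin 3 → ℝ) : Fin 3 → ℝ :=
  ![pd (fun y => u y 2) 1 x - pd (fun y => u y 1) 2 x,
    pd (fun y => u y 0) 2 x - pd (fun y => u y 2) 0 x,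
    pd (fun y => u y 1) 0 x - pd (fun y => u y 0) 1 x]

/-- Time-extended space I × M ⊆ ℝ × ℝ³. -/
abbrev P : Type := ℝ × (Fin 3 → ℝ)

/-- Lie bracket of vector fields on the time-extended space ℝ × ℝ³. -/
noncomputable def lieBracketP (F G : P → P) (p : P) : P :=
  fderiv ℝ G p (F p) - fderiv ℝ F p (G p)


open ContinuousLinearMap in
lemma hasFDerivAt_slice (u : P → Fin 3 → ℝ) (p : P) (hu : DifferentiableAt ℝ u p) (i : Fin 3) :
    HasFDerivAt (fun y => u (p.1, y) i)
      ((proj i : (Fin 3 → ℝ) →L[ℝ] ℝ).comp ((fderiv ℝ u p).comp (inr ℝ ℝ (Fin 3 → ℝ)))) p.2 :=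
  ((proj i : (Fin 3 → ℝ) →L[ℝ] ℝ).hasFDerivAt).comp p.2
    (hu.hasFDerivAt.comp p.2 (hasFDerivAt_prodMk_right p.1 p.2))

lemma pd_slice (u : P → Fin 3 → ℝ) (p : P) (hu : DifferentiableAt ℝ u p) (i j : Fin 3) :
    pd (fun y => u (p.1, y) i) j p.2 = fderiv ℝ u p (0, e j) i := by
  rw [pd, (hasFDerivAt_slice u p hu i).fderiv]; rfl

lemma pd_mul_sub (u w : P → Fin 3 → ℝ) (p : P) (hu : DifferentiableAt ℝ u p)
    (hw : DifferentiableAt ℝ w p) (a b c d j : Fin 3) :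
    pd (fun y => u (p.1, y) a * w (p.1, y) b - u (p.1, y) c * w (p.1, y) d) j p.2
      = (fderiv ℝ u p (0, e j) a * w p b + u p a * fderiv ℝ w p (0, e j) b)
        - (fderiv ℝ u p (0, e j) c * w p d + u p c * fderiv ℝ w p (0, e j) d) := by
  have h : HasFDerivAt (fun y => u (p.1, y) a * w (p.1, y) b - u (p.1, y) c * w (p.1, y) d) _ p.2 :=
    ((hasFDerivAt_slice u p hu a).mul (hasFDerivAt_slice w p hw b)).sub
    ((hasFDerivAt_slice u p hu c).mul (hasFDerivAt_slice w p hw d))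
  rw [pd, h.fderiv]
  simp [smul_eq_mul]
  ring

lemma deriv_time (u : P → Fin 3 → ℝ) (p : P) (hu : DifferentiableAt ℝ u p) :
    deriv (fun t => u (t, p.2)) p.1 = fderiv ℝ u p (1, (0 : Fin 3 → ℝ)) := by
  have h : HasDerivAt (fun t => u (t, p.2)) (fderiv ℝ u p (1, (0 : Fin 3 → ℝ))) p.1 := by
    have := HasFDerivAt.comp_hasDerivAt (f := fun t => (t, p.2)) p.1 hu.hasFDerivAt ((hasDerivAt_id p.1).prodMk (hasDerivAt_const p.1 p.2))
    exact this
  exact h.deriv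

/-- For time-dependent divergence-free C¹ fields v, B on an open S ⊆ ℝ × ℝ³, the frozen-field
equation ∂B/∂t − ∇ × (v × B) = 0 holds iff the suspended fields ∂ₜ + v and B commute. -/
theorem frozenField_iff_commute (S : Set P) (hS : IsOpen S)
    (v B : P → (Fin 3 → ℝ))
    (hv : ContDiffOn ℝ 1 v S) (hB : ContDiffOn ℝ 1 B S)
    (hdv : ∀ p ∈ S, div3 (fun y => v (p.1, y)) p.2 = 0)
    (hdB : ∀ p ∈ S, div3 (fun y => B (p.1, y)) p.2 = 0) :
    ∀ p ∈ S,
      (deriv (fun t => B (t, p.2)) p.1 -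
          curl3 (fun y => v (p.1, y) ⨯₃ B (p.1, y)) p.2 = 0
        ↔ lieBracketP (fun q => (1, v q)) (fun q => (0, B q)) p = 0) := by
  intro p hp
  have hmem := hS.mem_nhds hp
  have hvd : DifferentiableAt ℝ v p := (hv.differentiableOn one_ne_zero).differentiableAt hmem
  have hBd : DifferentiableAt ℝ B p := (hB.differentiableOn one_ne_zero).differentiableAt hmem
  -- divergence conditions in derivative form
  have hdv' : fderiv ℝ v p (0, e 0) 0 + fderiv ℝ v p (0, e 1) 1 + fderiv ℝ v p (0, e 2) 2 = 0 := by
    have h := hdv p hp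
    simpa only [div3, Fin.sum_univ_three, pd_slice v p hvd] using h
  have hdB' : fderiv ℝ B p (0, e 0) 0 + fderiv ℝ B p (0, e 1) 1 + fderiv ℝ B p (0, e 2) 2 = 0 := by
    have h := hdB p hp
    simpa only [div3, Fin.sum_univ_three, pd_slice B p hBd] using h
  -- decomposition of vectors
  have hvp : ((1:ℝ), v p) = ((1:ℝ), (0 : Fin 3 → ℝ)) + v p 0 • ((0:ℝ), e 0)
      + v p 1 • ((0:ℝ), e 1) + v p 2 • ((0:ℝ), e 2) := by
    refine Prod.ext (by simp) ?_
    funext i; fin_cases i <;> simp [e, Pi.single_apply]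
  have hBp : ((0:ℝ), B p) = B p 0 • ((0:ℝ), e 0) + B p 1 • ((0:ℝ), e 1) + B p 2 • ((0:ℝ), e 2) := by
    refine Prod.ext (by simp) ?_
    funext i; fin_cases i <;> simp [e, Pi.single_apply]
  have hLB : fderiv ℝ B p (1, v p) = fderiv ℝ B p (1, (0 : Fin 3 → ℝ)) + v p 0 • fderiv ℝ B p (0, e 0)
      + v p 1 • fderiv ℝ B p (0, e 1) + v p 2 • fderiv ℝ B p (0, e 2) := by
    rw [hvp]; simp only [map_add, ContinuousLinearMap.map_smul]
  have hLv : fderiv ℝ v p (0, B p) = B p 0 • fderiv ℝ v p (0, e 0) + B p 1 • fderiv ℝ v p (0, e 1) + B p 2 • fderiv ℝ v p (0, e 2) := by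
    rw [hBp]; simp only [map_add, ContinuousLinearMap.map_smul]
  -- the bracket
  have hG : HasFDerivAt (fun q : P => ((0:ℝ), B q)) ((0 : P →L[ℝ] ℝ).prod (fderiv ℝ B p)) p :=
    (hasFDerivAt_const (0:ℝ) p).prodMk hBd.hasFDerivAt
  have hF : HasFDerivAt (fun q : P => ((1:ℝ), v q)) ((0 : P →L[ℝ] ℝ).prod (fderiv ℝ v p)) p :=
    (hasFDerivAt_const (1:ℝ) p).prodMk hvd.hasFDerivAt
  have hbr : lieBracketP (fun q => (1, v q)) (fun q => (0, B q)) p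
      = ((0:ℝ), fderiv ℝ B p (1, v p) - fderiv ℝ v p (0, B p)) := by
    rw [lieBracketP, hG.fderiv, hF.fderiv]
    simp [Prod.ext_iff]
  -- key identity
  have key : fderiv ℝ B p (1, v p) - fderiv ℝ v p (0, B p)
      = deriv (fun t => B (t, p.2)) p.1 - curl3 (fun y => v (p.1, y) ⨯₃ B (p.1, y)) p.2 := by
    rw [deriv_time B p hBd, hLB, hLv]
    funext i
    fin_cases i
    · simp [curl3, cross_apply, pd_mul_sub v B p hvd hBd]
      linear_combination v p 0 * hdB' - B p 0 * hdv'
    · simp [curl3, cross_apply, pd_mul_sub v B p hvd hBd]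
      linear_combination v p 1 * hdB' - B p 1 * hdv'
    · simp [curl3, cross_apply, pd_mul_sub v B p hvd hBd]
      linear_combination v p 2 * hdB' - B p 2 * hdv'
  rw [hbr, ← key]
  constructor
  · intro h; rw [h]; rfl
  · intro h; exact congrArg Prod.snd h
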